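/- Let F ⊆ 2^[n] with ∅ ∈ F and [n] ∉ F. If ‖∂F‖_n = 1, then F = {F ⊆ [n] : |F| ≤ j} for some 0 ≤ j < n. -/

import Mathlib

open Finset

/-- The binomial norm of a family `F` of subsets of `[n]`:
`‖F‖ₙ = ∑_{A ∈ F} 1 / C(n, |A|)`. -/
noncomputable def binNorm (n : ℕ) (F : Finset (Finset ℕ)) : ℝ :=
  ∑ A ∈ F, 1 / (n.choose A.card : ℝ)

/-- The outer boundary of `F` inside `2^[n]`:
`∂F = {G ⊆ [n] : G ∉ F, ∃ A ∈ F, |A ∆ G| = 1}`. -/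
def outerBoundary (n : ℕ) (F : Finset (Finset ℕ)) : Finset (Finset ℕ) :=
  (Finset.range n).powerset.filter fun G =>
    G ∉ F ∧ ∃ A ∈ F, (symmDiff A G).card = 1

open Finset

/-- Level `k` of the maximal chain associated to a permutation of `Fin n`. -/
def chainSet (n : ℕ) (σ : Equiv.Perm (Fin n)) (k : ℕ) : Finset ℕ :=
  ((Finset.univ : Finset (Fin n)).filter fun i : Fin n => (i : ℕ) < k).image fun i => (σ i : ℕ)

lemma mem_chainSet {n : ℕ} {σ : Equiv.Perm (Fin n)} {k x : ℕ} :
    x ∈ chainSet n σ k ↔ ∃ i : Fin n, (i : ℕ) < k ∧ (σ i : ℕ) = x := by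
  simp [chainSet]

lemma card_filter_lt (n k : ℕ) (hk : k ≤ n) :
    (((Finset.univ : Finset (Fin n))).filter fun i : Fin n => (i : ℕ) < k).card = k := by
  rw [← Finset.card_range k]
  apply Finset.card_bij (fun (a : Fin n) _ => (a : ℕ))
  · intro a ha; simp only [Finset.mem_filter] at ha; simpa using ha.2
  · intro a _ b _ h; exact Fin.val_injective h
  · intro b hb
    simp only [Finset.mem_range] at hb
    exact ⟨⟨b, lt_of_lt_of_le hb hk⟩, by simp [hb], rfl⟩

lemma chainSet_inj {n : ℕ} (σ : Equiv.Perm (Fin n)) :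
    Function.Injective fun i : Fin n => (σ i : ℕ) :=
  Fin.val_injective.comp σ.injective

lemma card_chainSet {n : ℕ} (σ : Equiv.Perm (Fin n)) {k : ℕ} (hk : k ≤ n) :
    (chainSet n σ k).card = k := by
  rw [chainSet, Finset.card_image_of_injective _ (chainSet_inj σ), card_filter_lt n k hk]

lemma chainSet_zero {n : ℕ} (σ : Equiv.Perm (Fin n)) : chainSet n σ 0 = ∅ := by
  simp [chainSet]

lemma chainSet_subset_range {n : ℕ} (σ : Equiv.Perm (Fin n)) (k : ℕ) :
    chainSet n σ k ⊆ Finset.range n := by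
  intro x hx
  rcases mem_chainSet.mp hx with ⟨i, _, rfl⟩
  exact Finset.mem_range.mpr (σ i).2

lemma chainSet_top {n : ℕ} (σ : Equiv.Perm (Fin n)) : chainSet n σ n = Finset.range n := by
  apply Finset.eq_of_subset_of_card_le (chainSet_subset_range σ n)
  rw [card_chainSet σ le_rfl, Finset.card_range]

lemma chainSet_mono {n : ℕ} (σ : Equiv.Perm (Fin n)) {k m : ℕ} (h : k ≤ m) :
    chainSet n σ k ⊆ chainSet n σ m := by
  intro x hx
  rcases mem_chainSet.mp hx with ⟨i, hi, rfl⟩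
  exact mem_chainSet.mpr ⟨i, lt_of_lt_of_le hi h, rfl⟩

lemma card_symmDiff_of_subset {A B : Finset ℕ} (h : A ⊆ B) :
    (symmDiff A B).card = B.card - A.card := by
  have : symmDiff A B = B \ A := by
    rw [symmDiff_def]
    simp only [Finset.sup_eq_union]
    rw [Finset.sdiff_eq_empty_iff_subset.mpr h, Finset.empty_union]
  rw [this, Finset.card_sdiff_of_subset h]

/-- Crossing lemma: if the chain is in `F` at level `a` and out at level `b`,
then some level in `(a, b]` belongs to the outer boundary. -/
lemma exists_boundary_level (n : ℕ) (F : Finset (Finset ℕ)) (σ : Equiv.Perm (Fin n))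
    {a b : ℕ} (hab : a < b) (hb : b ≤ n)
    (ha : chainSet n σ a ∈ F) (hbn : chainSet n σ b ∉ F) :
    ∃ k, a < k ∧ k ≤ b ∧ chainSet n σ k ∈ outerBoundary n F := by
  classical
  have hex : ∃ k, a < k ∧ chainSet n σ k ∉ F := ⟨b, hab, hbn⟩
  obtain ⟨hak, hkF⟩ := Nat.find_spec hex
  set k := Nat.find hex
  have hkb : k ≤ b := Nat.find_min' hex ⟨hab, hbn⟩
  have hk1 : 1 ≤ k := by omega
  have hprev : chainSet n σ (k - 1) ∈ F := by
    rcases eq_or_lt_of_le (Nat.le_sub_one_of_lt hak) with h | h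
    · rwa [← h]
    · by_contra hc
      exact Nat.find_min hex (show k - 1 < k by omega) ⟨h, hc⟩
  refine ⟨k, hak, hkb, ?_⟩
  rw [outerBoundary, Finset.mem_filter]
  refine ⟨Finset.mem_powerset.mpr (chainSet_subset_range σ k), hkF, chainSet n σ (k - 1), hprev, ?_⟩
  rw [card_symmDiff_of_subset (chainSet_mono σ (Nat.sub_le k 1)),
    card_chainSet σ (le_trans hkb hb), card_chainSet σ (by omega)]
  omega

/-- The number of permutations whose chain passes through `G`. -/
def Nperm (n : ℕ) (G : Finset ℕ) : ℕ :=
  (Finset.univ.filter fun σ : Equiv.Perm (Fin n) => chainSet n σ G.card = G).card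

lemma sum_Nperm (n k : ℕ) (hk : k ≤ n) :
    ∑ G ∈ Finset.powersetCard k (Finset.range n), Nperm n G = n.factorial := by
  have h : ∀ σ : Equiv.Perm (Fin n), σ ∈ (Finset.univ : Finset (Equiv.Perm (Fin n))) →
      chainSet n σ k ∈ Finset.powersetCard k (Finset.range n) := by
    intro σ _
    exact Finset.mem_powersetCard.mpr ⟨chainSet_subset_range σ k, card_chainSet σ hk⟩
  have h2 := Finset.card_eq_sum_card_fiberwise h
  rw [Finset.card_univ, Fintype.card_perm, Fintype.card_fin] at h2
  rw [h2]
  apply Finset.sum_congr rfl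
  intro G hG
  have hGc : G.card = k := (Finset.mem_powersetCard.mp hG).2
  rw [Nperm, hGc]

lemma card_filter_mem {n : ℕ} {G : Finset ℕ} (hG : G ⊆ Finset.range n) :
    (((Finset.univ : Finset (Fin n))).filter fun i : Fin n => (i : ℕ) ∈ G).card = G.card := by
  apply Finset.card_bij (fun (a : Fin n) _ => (a : ℕ))
  · intro a ha; simpa using (Finset.mem_filter.mp ha).2
  · intro a _ b _ h; exact Fin.val_injective h
  · intro b hb
    exact ⟨⟨b, Finset.mem_range.mp (hG hb)⟩, by simpa using hb, rfl⟩

lemma exists_perm_map {n : ℕ} {G G' : Finset ℕ} (hG : G ⊆ Finset.range n)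
    (hG' : G' ⊆ Finset.range n) (hc : G.card = G'.card) :
    ∃ τ : Equiv.Perm (Fin n), (∀ i : Fin n, (i : ℕ) ∈ G → (τ i : ℕ) ∈ G') ∧
      (∀ i : Fin n, (i : ℕ) ∉ G → (τ i : ℕ) ∉ G') := by
  classical
  have hcard : Fintype.card {i : Fin n // (i : ℕ) ∈ G} = Fintype.card {i : Fin n // (i : ℕ) ∈ G'} := by
    rw [Fintype.card_subtype, Fintype.card_subtype, card_filter_mem hG, card_filter_mem hG', hc]
  obtain ⟨e⟩ := Fintype.card_eq.mp hcard
  refine ⟨e.extendSubtype, ?_, ?_⟩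
  · intro i hi; exact e.extendSubtype_mem i hi
  · intro i hi; exact e.extendSubtype_not_mem i hi

lemma chainSet_mul {n : ℕ} {G G' : Finset ℕ} {k : ℕ} (hk : k ≤ n)
    (_hG'sub : G' ⊆ Finset.range n) (hG'c : G'.card = k)
    (τ σ : Equiv.Perm (Fin n))
    (hτ : ∀ i : Fin n, (i : ℕ) ∈ G → (τ i : ℕ) ∈ G')
    (hσ : chainSet n σ k = G) : chainSet n (τ * σ) k = G' := by
  apply Finset.eq_of_subset_of_card_le
  · intro x hx
    rcases mem_chainSet.mp hx with ⟨i, hi, rfl⟩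
    have : (σ i : ℕ) ∈ G := by rw [← hσ]; exact mem_chainSet.mpr ⟨i, hi, rfl⟩
    exact hτ _ this
  · rw [card_chainSet _ hk, hG'c]

lemma Nperm_eq {n k : ℕ} {G G' : Finset ℕ}
    (hG : G ∈ Finset.powersetCard k (Finset.range n))
    (hG' : G' ∈ Finset.powersetCard k (Finset.range n)) :
    Nperm n G = Nperm n G' := by
  obtain ⟨hGs, hGc⟩ := Finset.mem_powersetCard.mp hG
  obtain ⟨hG's, hG'c⟩ := Finset.mem_powersetCard.mp hG'
  have hk : k ≤ n := by rw [← hGc]; simpa using Finset.card_le_card hGs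
  obtain ⟨τ, hτ1, hτ2⟩ := exists_perm_map hGs hG's (by rw [hGc, hG'c])
  have hτinv : ∀ i : Fin n, (i : ℕ) ∈ G' → ((τ⁻¹ i : Fin n) : ℕ) ∈ G := by
    intro i hi
    by_contra hc
    exact hτ2 _ hc (by simpa using hi)
  rw [Nperm, Nperm, hGc, hG'c]
  apply Finset.card_bij' (fun σ _ => τ * σ) (fun σ _ => τ⁻¹ * σ)
  · intro σ hσ
    simp only [Finset.mem_filter, Finset.mem_univ, true_and] at hσ ⊢
    exact chainSet_mul hk hG's hG'c τ σ hτ1 hσ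
  · intro σ hσ
    simp only [Finset.mem_filter, Finset.mem_univ, true_and] at hσ ⊢
    exact chainSet_mul hk hGs hGc τ⁻¹ σ hτinv hσ
  · intro σ _; group
  · intro σ _; group

lemma Nperm_mul_choose {n : ℕ} {G : Finset ℕ} (hG : G ⊆ Finset.range n) :
    n.choose G.card * Nperm n G = n.factorial := by
  have hk : G.card ≤ n := by simpa using Finset.card_le_card hG
  have hGm : G ∈ Finset.powersetCard G.card (Finset.range n) :=
    Finset.mem_powersetCard.mpr ⟨hG, rfl⟩
  have := sum_Nperm n G.card hk
  rw [Finset.sum_congr rfl (fun G' hG' => Nperm_eq hG' hGm)] at this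
  rw [Finset.sum_const, Finset.card_powersetCard, Finset.card_range, smul_eq_mul] at this
  exact this

lemma hits_eq_one (n : ℕ) (F : Finset (Finset ℕ))
    (hbot : ∅ ∈ F) (htop : Finset.range n ∉ F)
    (heq : binNorm n (outerBoundary n F) = 1) :
    ∀ σ : Equiv.Perm (Fin n),
      ((outerBoundary n F).filter fun G => chainSet n σ G.card = G).card = 1 := by
  have hn : 0 < n := by
    rcases Nat.eq_zero_or_pos n with h | h
    · subst h; simp at htop; exact absurd hbot htop
    · exact h
  -- each G in the boundary is inside range n
  have hBsub : ∀ G ∈ outerBoundary n F, G ⊆ Finset.range n := by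
    intro G hG
    exact Finset.mem_powerset.mp (Finset.mem_filter.mp hG).1
  -- sum of Nperm over the boundary equals n!
  have hsumN : ∑ G ∈ outerBoundary n F, Nperm n G = n.factorial := by
    have hreal : ((∑ G ∈ outerBoundary n F, Nperm n G : ℕ) : ℝ) = (n.factorial : ℝ) := by
      push_cast
      have : ∀ G ∈ outerBoundary n F,
          (Nperm n G : ℝ) = (n.factorial : ℝ) * (1 / (n.choose G.card : ℝ)) := by
        intro G hG
        have hch : (0 : ℝ) < (n.choose G.card : ℝ) := by
          have : G.card ≤ n := by simpa using Finset.card_le_card (hBsub G hG)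
          exact_mod_cast Nat.choose_pos this
        have := Nperm_mul_choose (hBsub G hG)
        have hcast : (n.choose G.card : ℝ) * (Nperm n G : ℝ) = (n.factorial : ℝ) := by
          exact_mod_cast congrArg (Nat.cast : ℕ → ℝ) this
        field_simp
        linarith [hcast]
      rw [Finset.sum_congr rfl this, ← Finset.mul_sum, ← binNorm, heq, mul_one]
    exact_mod_cast hreal
  -- exchange sums
  have hexch : ∑ G ∈ outerBoundary n F, Nperm n G =
      ∑ σ : Equiv.Perm (Fin n),
        ((outerBoundary n F).filter fun G => chainSet n σ G.card = G).card := by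
    simp only [Nperm, Finset.card_filter]
    rw [Finset.sum_comm]
  -- each chain hits at least once
  have hone : ∀ σ : Equiv.Perm (Fin n),
      1 ≤ ((outerBoundary n F).filter fun G => chainSet n σ G.card = G).card := by
    intro σ
    have h0 : chainSet n σ 0 ∈ F := by rw [chainSet_zero]; exact hbot
    have hnn : chainSet n σ n ∉ F := by rw [chainSet_top]; exact htop
    obtain ⟨k, hk0, hkn, hkB⟩ := exists_boundary_level n F σ hn le_rfl h0 hnn
    apply Finset.card_pos.mpr
    refine ⟨chainSet n σ k, Finset.mem_filter.mpr ⟨hkB, ?_⟩⟩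
    rw [card_chainSet σ hkn]
  -- conclude all are exactly one
  intro σ
  by_contra hne
  have h2 : 2 ≤ ((outerBoundary n F).filter fun G => chainSet n σ G.card = G).card := by
    have := hone σ; omega
  have hlt : (Finset.univ : Finset (Equiv.Perm (Fin n))).card <
      ∑ σ : Equiv.Perm (Fin n),
        ((outerBoundary n F).filter fun G => chainSet n σ G.card = G).card := by
    rw [Finset.card_eq_sum_ones]
    exact Finset.sum_lt_sum (fun i _ => hone i) ⟨σ, Finset.mem_univ σ, by omega⟩
  rw [← hexch, hsumN, Finset.card_univ, Fintype.card_perm, Fintype.card_fin] at hlt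
  omega

lemma exists_chain_through {n : ℕ} {B A : Finset ℕ} (hBA : B ⊆ A) (hA : A ⊆ Finset.range n) :
    ∃ σ : Equiv.Perm (Fin n), chainSet n σ B.card = B ∧ chainSet n σ A.card = A := by
  classical
  set l : List ℕ := B.toList ++ ((A \ B).toList ++ ((Finset.range n \ A)).toList) with hl
  have hcardBA : B.card ≤ A.card := Finset.card_le_card hBA
  have hcardA : A.card ≤ n := by simpa using Finset.card_le_card hA
  have hlen : l.length = n := by
    simp only [hl, List.length_append, Finset.length_toList]
    rw [Finset.card_sdiff_of_subset hBA, Finset.card_sdiff_of_subset hA, Finset.card_range]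
    omega
  have hmem_range : ∀ x ∈ l, x < n := by
    intro x hx
    simp only [hl, List.mem_append, Finset.mem_toList] at hx
    rcases hx with h | h | h
    · exact Finset.mem_range.mp (hA (hBA h))
    · exact Finset.mem_range.mp (hA (Finset.mem_sdiff.mp h).1)
    · exact Finset.mem_range.mp (Finset.mem_sdiff.mp h).1
  have hnodup : l.Nodup := by
    rw [hl]
    rw [List.nodup_append, List.nodup_append]
    refine ⟨Finset.nodup_toList B, ⟨Finset.nodup_toList _, Finset.nodup_toList _, ?_⟩, ?_⟩
    · intro x hx y hy hxy; subst hxy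
      simp only [Finset.mem_toList, Finset.mem_sdiff] at hx hy
      exact hy.2 hx.1
    · intro x hx y hy hxy; subst hxy
      simp only [Finset.mem_toList, List.mem_append, Finset.mem_toList, Finset.mem_sdiff] at hx hy
      rcases hy with h | h
      · exact h.2 hx
      · exact h.2 (hBA hx)
  have hget : ∀ (i : ℕ) (h : i < l.length), l[i] < n := fun i h =>
    hmem_range _ (List.getElem_mem _)
  let f : Fin n → Fin n := fun i =>
    ⟨l[(i : ℕ)]'(by rw [hlen]; exact i.2), hget _ _⟩
  have hinj : Function.Injective f := by
    intro i j hij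
    have : l[(i : ℕ)]'(by rw [hlen]; exact i.2) = l[(j : ℕ)]'(by rw [hlen]; exact j.2) :=
      congrArg Fin.val hij
    have := (List.Nodup.getElem_inj_iff hnodup).mp this
    exact Fin.ext this
  let σ : Equiv.Perm (Fin n) := Equiv.ofBijective f (Finite.injective_iff_bijective.mp hinj)
  have hσ : ∀ i : Fin n, (σ i : ℕ) = l[(i : ℕ)]'(by rw [hlen]; exact i.2) := fun i => rfl
  have hchain : ∀ k : ℕ, k ≤ n → chainSet n σ k = (l.take k).toFinset := by
    intro k hk
    ext x
    rw [mem_chainSet, List.mem_toFinset, List.mem_iff_getElem]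
    constructor
    · rintro ⟨i, hik, rfl⟩
      refine ⟨(i : ℕ), ?_, ?_⟩
      · rw [List.length_take, hlen]; omega
      · rw [List.getElem_take]; exact (hσ i).symm
    · rintro ⟨j, hj, rfl⟩
      have hj' : j < min k l.length := by simpa [List.length_take] using hj
      have hjn : j < n := by rw [← hlen]; omega
      refine ⟨⟨j, hjn⟩, lt_of_lt_of_le hj' (min_le_left _ _), ?_⟩
      rw [hσ, List.getElem_take]
  have htake1 : l.take B.card = B.toList := by
    rw [hl, List.take_left' (Finset.length_toList B)]
  have htake2 : l.take A.card = B.toList ++ (A \ B).toList := by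
    rw [hl, ← List.append_assoc, List.take_left']
    rw [List.length_append, Finset.length_toList, Finset.length_toList,
      Finset.card_sdiff_of_subset hBA]
    omega
  refine ⟨σ, ?_, ?_⟩
  · rw [hchain _ (le_trans hcardBA hcardA), htake1, Finset.toList_toFinset]
  · rw [hchain _ hcardA, htake2, List.toFinset_append, Finset.toList_toFinset,
      Finset.toList_toFinset, Finset.union_sdiff_of_subset hBA]

section Main
variable {n : ℕ} {F : Finset (Finset ℕ)}

lemma downset_of_hits (hsub : ∀ A ∈ F, A ⊆ Finset.range n)
    (hbot : ∅ ∈ F) (htop : Finset.range n ∉ F)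
    (hhits : ∀ σ : Equiv.Perm (Fin n),
      ((outerBoundary n F).filter fun G => chainSet n σ G.card = G).card = 1) :
    ∀ A ∈ F, ∀ B ⊆ A, B ∈ F := by
  intro A hA B hBA
  by_contra hB
  have hAr : A ⊆ Finset.range n := hsub A hA
  have hBne : B ≠ A := fun h => hB (h ▸ hA)
  have hcard : B.card < A.card := Finset.card_lt_card (ssubset_of_ne_of_subset hBne hBA)
  have hB0 : 0 < B.card := by
    rcases Nat.eq_zero_or_pos B.card with h | h
    · exact absurd (Finset.card_eq_zero.mp h ▸ hbot) hB
    · exact h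
  have hAn : A.card < n := by
    have hle : A.card ≤ n := by simpa using Finset.card_le_card hAr
    rcases eq_or_lt_of_le hle with h | h
    · exact absurd (Finset.eq_of_subset_of_card_le hAr (by simp [h])) (fun he => htop (he ▸ hA))
    · exact h
  obtain ⟨σ, hσB, hσA⟩ := exists_chain_through hBA hAr
  obtain ⟨k1, hk10, hk1B, hG1⟩ := exists_boundary_level n F σ hB0
    (le_of_lt (lt_trans hcard hAn)) (by rw [chainSet_zero]; exact hbot) (by rw [hσB]; exact hB)
  obtain ⟨k2, hk2A, hk2n, hG2⟩ := exists_boundary_level n F σ hAn le_rfl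
    (by rw [hσA]; exact hA) (by rw [chainSet_top]; exact htop)
  have hk1n : k1 ≤ n := by omega
  have hmem1 : chainSet n σ k1 ∈ (outerBoundary n F).filter
      fun G => chainSet n σ G.card = G :=
    Finset.mem_filter.mpr ⟨hG1, by rw [card_chainSet σ hk1n]⟩
  have hmem2 : chainSet n σ k2 ∈ (outerBoundary n F).filter
      fun G => chainSet n σ G.card = G :=
    Finset.mem_filter.mpr ⟨hG2, by rw [card_chainSet σ hk2n]⟩
  have := Finset.card_le_one.mp (le_of_eq (hhits σ)) _ hmem1 _ hmem2
  have hcards := congrArg Finset.card this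
  rw [card_chainSet σ hk1n, card_chainSet σ hk2n] at hcards
  omega

lemma antichain_of_hits
    (hhits : ∀ σ : Equiv.Perm (Fin n),
      ((outerBoundary n F).filter fun G => chainSet n σ G.card = G).card = 1) :
    ∀ G1 ∈ outerBoundary n F, ∀ G2 ∈ outerBoundary n F, G1 ⊆ G2 → G1 = G2 := by
  intro G1 hG1 G2 hG2 h12
  have hG2r : G2 ⊆ Finset.range n := Finset.mem_powerset.mp (Finset.mem_filter.mp hG2).1
  obtain ⟨σ, hσ1, hσ2⟩ := exists_chain_through h12 hG2r
  exact Finset.card_le_one.mp (le_of_eq (hhits σ)) _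
    (Finset.mem_filter.mpr ⟨hG1, hσ1⟩) _ (Finset.mem_filter.mpr ⟨hG2, hσ2⟩)

end Main

lemma mem_outerBoundary_of {n : ℕ} {F : Finset (Finset ℕ)} {S T : Finset ℕ}
    (hT : T ∈ F) (hS : S ∉ F) (hSr : S ⊆ Finset.range n) (hTS : T ⊆ S)
    (hcard : S.card = T.card + 1) : S ∈ outerBoundary n F := by
  rw [outerBoundary, Finset.mem_filter]
  exact ⟨Finset.mem_powerset.mpr hSr, hS, T, hT,
    by rw [card_symmDiff_of_subset hTS]; omega⟩

lemma walk_lemma {n : ℕ} {F : Finset (Finset ℕ)}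
    (hdown : ∀ A ∈ F, ∀ B ⊆ A, B ∈ F)
    (hanti : ∀ G1 ∈ outerBoundary n F, ∀ G2 ∈ outerBoundary n F, G1 ⊆ G2 → G1 = G2)
    {A' : Finset ℕ} (hA' : A' ∈ F) (hA'r : A' ⊆ Finset.range n) :
    ∀ d : ℕ, ∀ B' : Finset ℕ, (B' \ A').card = d → B' ⊆ Finset.range n →
      B'.card = A'.card → B' ∈ F := by
  intro d
  induction d using Nat.strong_induction_on with
  | _ d ih =>
    intro B' hd hr hc
    by_contra hB'
    rcases Finset.eq_empty_or_nonempty (B' \ A') with hemp | ⟨y, hy⟩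
    · have : B' = A' := Finset.eq_of_subset_of_card_le
        (Finset.sdiff_eq_empty_iff_subset.mp hemp) (le_of_eq hc.symm)
      exact hB' (this ▸ hA')
    · have hyB : y ∈ B' := (Finset.mem_sdiff.mp hy).1
      have hyA : y ∉ A' := (Finset.mem_sdiff.mp hy).2
      have hAB : (A' \ B').Nonempty := by
        rcases Finset.eq_empty_or_nonempty (A' \ B') with h | h
        · exfalso
          have : A' = B' := Finset.eq_of_subset_of_card_le
            (Finset.sdiff_eq_empty_iff_subset.mp h) (le_of_eq hc)
          exact hyA (this ▸ hyB)
        · exact h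
      obtain ⟨x, hx⟩ := hAB
      have hxA : x ∈ A' := (Finset.mem_sdiff.mp hx).1
      have hxB : x ∉ B' := (Finset.mem_sdiff.mp hx).2
      have hd1 : 1 ≤ d := by
        rw [← hd]
        exact Finset.card_pos.mpr ⟨y, hy⟩
      set B₁ := insert x (B'.erase y) with hB₁def
      have hB'pos : 1 ≤ B'.card := Finset.card_pos.mpr ⟨y, hyB⟩
      have hcB₁ : B₁.card = B'.card := by
        rw [hB₁def, Finset.card_insert_of_notMem (fun h => hxB (Finset.erase_subset _ _ h)),
          Finset.card_erase_of_mem hyB]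
        omega
      have hrB₁ : B₁ ⊆ Finset.range n := by
        rw [hB₁def]
        exact Finset.insert_subset (hA'r hxA) (le_trans (Finset.erase_subset _ _) hr)
      have hdB₁ : (B₁ \ A').card = d - 1 := by
        have h1 : B₁ \ A' = (B' \ A').erase y := by
          rw [hB₁def]
          ext z
          simp only [Finset.mem_sdiff, Finset.mem_insert, Finset.mem_erase]
          constructor
          · rintro ⟨h | h, hz2⟩
            · exact absurd hxA (h ▸ hz2)
            · exact ⟨h.1, h.2, hz2⟩
          · rintro ⟨h1, h2, h3⟩
            exact ⟨Or.inr ⟨h1, h2⟩, h3⟩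
        rw [h1, Finset.card_erase_of_mem hy, hd]
      by_cases hB₁F : B₁ ∈ F
      · have heraseF : B'.erase y ∈ F :=
          hdown B₁ hB₁F _ (Finset.subset_insert _ _)
        have hBbd : B' ∈ outerBoundary n F :=
          mem_outerBoundary_of heraseF hB' hr (Finset.erase_subset _ _)
            (by rw [Finset.card_erase_of_mem hyB]; omega)
        have hBx : insert x B' ∉ F := fun h => hB' (hdown _ h B' (Finset.subset_insert _ _))
        have hBxbd : insert x B' ∈ outerBoundary n F := by
          apply mem_outerBoundary_of hB₁F hBx
            (Finset.insert_subset (hA'r hxA) hr)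
          · rw [hB₁def]
            exact Finset.insert_subset_insert _ (Finset.erase_subset _ _)
          · rw [Finset.card_insert_of_notMem hxB, hcB₁]
        have heq := hanti B' hBbd _ hBxbd (Finset.subset_insert _ _)
        have := congrArg Finset.card heq
        rw [Finset.card_insert_of_notMem hxB] at this
        omega
      · exact hB₁F (ih (d - 1) (by omega) B₁ hdB₁ hrB₁ (by rw [hcB₁, hc]))

theorem stmt_11 (n : ℕ) (F : Finset (Finset ℕ))
    (hsub : ∀ A ∈ F, A ⊆ Finset.range n)
    (hbot : ∅ ∈ F) (htop : Finset.range n ∉ F)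
    (heq : binNorm n (outerBoundary n F) = 1) :
    ∃ j, j < n ∧
      F = (Finset.range n).powerset.filter fun A => A.card ≤ j := by
  classical
  have hn : 0 < n := by
    rcases Nat.eq_zero_or_pos n with h | h
    · subst h; simp only [Finset.range_zero] at htop; exact absurd hbot htop
    · exact h
  have hhits := hits_eq_one n F hbot htop heq
  have hdown := downset_of_hits hsub hbot htop hhits
  have hanti := antichain_of_hits hhits
  -- the complement of F inside the powerset
  set P := (Finset.range n).powerset.filter (fun S => S ∉ F) with hP
  have hPne : P.Nonempty := ⟨Finset.range n, Finset.mem_filter.mpr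
    ⟨Finset.mem_powerset.mpr subset_rfl, htop⟩⟩
  obtain ⟨B0, hB0P, hB0min⟩ := Finset.exists_min_image P Finset.card hPne
  have hB0F : B0 ∉ F := (Finset.mem_filter.mp hB0P).2
  have hB0r : B0 ⊆ Finset.range n := Finset.mem_powerset.mp (Finset.mem_filter.mp hB0P).1
  have hB0pos : 1 ≤ B0.card := by
    rcases Nat.eq_zero_or_pos B0.card with h | h
    · exact absurd (Finset.card_eq_zero.mp h ▸ hbot) hB0F
    · exact h
  have hB0n : B0.card ≤ n := by simpa using Finset.card_le_card hB0r
  refine ⟨B0.card - 1, by omega, ?_⟩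
  ext A
  simp only [Finset.mem_filter, Finset.mem_powerset]
  constructor
  · intro hA
    refine ⟨hsub A hA, ?_⟩
    by_contra hlarge
    have hlarge' : B0.card ≤ A.card := by omega
    obtain ⟨A', hA'A, hA'c⟩ := Finset.exists_subset_card_eq hlarge'
    have hA'F : A' ∈ F := hdown A hA A' hA'A
    have hA'r : A' ⊆ Finset.range n := le_trans hA'A (hsub A hA)
    exact hB0F (walk_lemma hdown hanti hA'F hA'r (B0 \ A').card B0 rfl hB0r
      (by rw [hA'c]))
  · rintro ⟨hAr, hAc⟩
    by_contra hAF
    have : B0.card ≤ A.card := hB0min A (Finset.mem_filter.mpr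
      ⟨Finset.mem_powerset.mpr hAr, hAF⟩)
    omega
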